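/- Every k x k minor of the output matrix A = O(P), where a_{nk} = (P^n)_{0k}, can be written as a polynomial with nonnegative integer coefficients in the minors of size at most k of P. Consequently, if P is a row-finite or column-finite matrix over a partially ordered commutative ring and P is totally positive of order r, then the output matrix O(P) is totally positive of order r. -/

import Mathlib

/-- Product of infinite matrices, defined via `finsum` (a genuine finite sum
whenever the left factor is row-finite or the right factor is column-finite). -/
noncomputable def fMul {R : Type*} [CommRing R] (P Q : ℕ → ℕ → R) : ℕ → ℕ → R :=
  fun i k => ∑ᶠ j, P i j * Q j k

/-- Powers of an infinite matrix. -/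
noncomputable def fPow {R : Type*} [CommRing R] (P : ℕ → ℕ → R) : ℕ → ℕ → ℕ → R
  | 0 => fun i j => if i = j then 1 else 0
  | n + 1 => fMul (fPow P n) P

/-- The output matrix of a production matrix `P`: `O(P)_{nk} = (P^n)_{0k}`. -/
noncomputable def outputMat {R : Type*} [CommRing R] (P : ℕ → ℕ → R) : ℕ → ℕ → R :=
  fun n k => fPow P n 0 k

/-- A minor of an infinite matrix: the determinant of the square submatrix with
rows `r 0 < r 1 < ⋯` and columns `c 0 < c 1 < ⋯`. -/
noncomputable def minor {R : Type*} [CommRing R] (A : ℕ → ℕ → R) {k : ℕ}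
    (r c : Fin k → ℕ) : R :=
  (Matrix.of fun i j => A (r i) (c j)).det

/-- `P` is row-finite or column-finite. -/
def RowOrColFinite {R : Type*} [Zero R] (P : ℕ → ℕ → R) : Prop :=
  (∀ i, (Function.support (P i)).Finite) ∨ (∀ j, (Function.support fun i => P i j).Finite)

section CauchyBinet

open Finset Matrix Equiv

variable {R : Type*} [CommRing R]

theorem det_mul_expand {k L : ℕ} (A : Matrix (Fin k) (Fin L) R) (B : Matrix (Fin L) (Fin k) R) :
    (A * B).det = ∑ p : Fin k → Fin L,
      (∏ i, B (p i) i) * (Matrix.of fun i j => A i (p j)).det := by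
  have h1 : (A * B).det
      = ∑ p : Fin k → Fin L, ∑ σ : Perm (Fin k),
          ((Perm.sign σ : ℤ) : R) * ∏ i, A (σ i) (p i) * B (p i) i := by
    simp only [det_apply', mul_apply, prod_univ_sum, mul_sum, Fintype.piFinset_univ]
    rw [Finset.sum_comm]
  rw [h1]
  refine Finset.sum_congr rfl fun p _ => ?_
  rw [det_apply', Finset.mul_sum]
  refine Finset.sum_congr rfl fun σ _ => ?_
  simp only [Matrix.of_apply, prod_mul_distrib]
  ring

theorem cauchy_binet {k L : ℕ} (A : Matrix (Fin k) (Fin L) R) (B : Matrix (Fin L) (Fin k) R) :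
    (A * B).det = ∑ f ∈ Finset.univ.filter (fun f : Fin k → Fin L => StrictMono f),
      (Matrix.of fun i j => A i (f j)).det * (Matrix.of fun i j => B (f i) j).det := by
  rw [det_mul_expand]
  have h2 : ∑ p : Fin k → Fin L, (∏ i, B (p i) i) * (Matrix.of fun i j => A i (p j)).det
      = ∑ p ∈ Finset.univ.filter (fun p : Fin k → Fin L => Function.Injective p),
          (∏ i, B (p i) i) * (Matrix.of fun i j => A i (p j)).det := by
    refine (Finset.sum_subset (filter_subset _ _) fun p _ hp => ?_).symm
    have hp' : ¬ Function.Injective p := by simpa using hp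
    rw [Function.Injective] at hp'
    push_neg at hp'
    obtain ⟨i, j, hpij, hij⟩ := hp'
    have : (Matrix.of fun i j => A i (p j)).det = 0 :=
      Matrix.det_zero_of_column_eq hij (fun x => by simp [hpij])
    rw [this, mul_zero]
  rw [h2]
  have h3 : ∑ p ∈ Finset.univ.filter (fun p : Fin k → Fin L => Function.Injective p),
          (∏ i, B (p i) i) * (Matrix.of fun i j => A i (p j)).det
      = ∑ x ∈ (Finset.univ.filter (fun f : Fin k → Fin L => StrictMono f)) ×ˢ
            (Finset.univ : Finset (Perm (Fin k))),
          (∏ i, B (x.1 (x.2 i)) i) * (Matrix.of fun i j => A i (x.1 (x.2 j))).det := by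
    refine (Finset.sum_bij (i := fun (x : (Fin k → Fin L) × Perm (Fin k)) _ => x.1 ∘ x.2)
      ?_ ?_ ?_ ?_).symm
    · intro x hx
      simp only [Finset.mem_product, Finset.mem_filter, Finset.mem_univ, true_and] at hx
      simp only [Finset.mem_filter, Finset.mem_univ, true_and]
      exact hx.1.injective.comp x.2.injective
    · intro x hx y hy hxy
      simp only [Finset.mem_product, Finset.mem_filter, Finset.mem_univ, true_and] at hx hy
      have hxy' : x.1 ∘ (x.2 : Fin k → Fin k) = y.1 ∘ (y.2 : Fin k → Fin k) := hxy
      have hr : Set.range (x.1 ∘ (x.2 : Fin k → Fin k)) = Set.range x.1 := by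
        rw [Set.range_comp, Equiv.range_eq_univ, Set.image_univ]
      have hr' : Set.range (y.1 ∘ (y.2 : Fin k → Fin k)) = Set.range y.1 := by
        rw [Set.range_comp, Equiv.range_eq_univ, Set.image_univ]
      have hrr : Set.range x.1 = Set.range y.1 := by rw [← hr, ← hr', hxy']
      haveI : WellFoundedLT (Fin k) := Finite.to_wellFoundedLT
      have h1 : x.1 = y.1 := ((hx.1).range_inj (hy.1)).mp hrr
      have h2 : x.2 = y.2 := by
        ext i
        have := congrFun hxy' i
        simp only [Function.comp_apply, h1] at this
        exact congrArg Fin.val ((hy.1).injective this)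
      exact Prod.ext h1 h2
    · intro p hp
      have hpinj : Function.Injective p := by simpa using hp
      have hcard : (Finset.image p Finset.univ).card = k := by
        rw [Finset.card_image_of_injective _ hpinj, Finset.card_univ, Fintype.card_fin]
      set s := Finset.image p Finset.univ with hs
      set f : Fin k → Fin L := fun i => s.orderEmbOfFin hcard i with hf
      have hmem : ∀ i, p i ∈ s := fun i => Finset.mem_image_of_mem p (mem_univ i)
      set σfun : Fin k → Fin k := fun i => (s.orderIsoOfFin hcard).symm ⟨p i, hmem i⟩ with hσ
      have hσinj : Function.Injective σfun := by
        intro a b hab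
        apply hpinj
        have := congrArg (fun z => (((s.orderIsoOfFin hcard)) z : Fin L)) hab
        simpa only [hσ, OrderIso.apply_symm_apply] using this
      have hσbij : Function.Bijective σfun := Finite.injective_iff_bijective.mp hσinj
      refine ⟨⟨f, Equiv.ofBijective σfun hσbij⟩, ?_, ?_⟩
      · simp only [Finset.mem_product, Finset.mem_filter, Finset.mem_univ, true_and, and_true]
        exact (s.orderEmbOfFin hcard).strictMono
      · funext i
        show f (σfun i) = p i
        show ((s.orderIsoOfFin hcard) ((s.orderIsoOfFin hcard).symm ⟨p i, hmem i⟩) : Fin L) = p i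
        simp
    · intro x hx
      rfl
  rw [h3, Finset.sum_product]
  refine Finset.sum_congr rfl fun f hf => ?_
  have key : ∀ σ : Perm (Fin k),
      (Matrix.of fun i j => A i (f (σ j))).det
        = ((Perm.sign σ : ℤ) : R) * (Matrix.of fun i j => A i (f j)).det := by
    intro σ
    have := Matrix.det_permute' σ (Matrix.of fun i j => A i (f j))
    simpa [Matrix.submatrix] using this
  calc ∑ σ : Perm (Fin k), (∏ i, B (f (σ i)) i) * (Matrix.of fun i j => A i (f (σ j))).det
      = (Matrix.of fun i j => A i (f j)).det *
          ∑ σ : Perm (Fin k), ((Perm.sign σ : ℤ) : R) * ∏ i, B (f (σ i)) i := by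
        rw [Finset.mul_sum]
        refine Finset.sum_congr rfl fun σ _ => ?_
        rw [key σ]; ring
    _ = _ := by
        congr 1
        rw [Matrix.det_apply']
        simp only [Matrix.of_apply]

end CauchyBinet

section GoodMachinery

open Finset

/-- strict monotonicity of `f` on `{0, ..., m-1}`. -/
def MonoOn (m : ℕ) (f : ℕ → ℕ) : Prop := ∀ i j : ℕ, i < j → j < m → f i < f j

lemma monoOn_iff {m : ℕ} {f : ℕ → ℕ} : MonoOn m f ↔ StrictMono (fun i : Fin m => f i) := by
  constructor
  · intro h a b hab
    exact h a b hab b.isLt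
  · intro h i j hij hj
    exact h (a := ⟨i, lt_trans hij hj⟩) (b := ⟨j, hj⟩) hij

/-- A minor with `ℕ`-indexed data. -/
noncomputable def minorAux {R : Type*} [CommRing R] (P : ℕ → ℕ → R) (m : ℕ)
    (row col : ℕ → ℕ) : R :=
  minor P (fun i : Fin m => row i) (fun i : Fin m => col i)

/-- `x` is a product of minors of `P` of size at most `k` with increasing rows/cols. -/
def GoodProd {R : Type*} [CommRing R] (P : ℕ → ℕ → R) (k : ℕ) (x : R) : Prop :=
  ∃ (m : ℕ) (sz : ℕ → ℕ) (row col : ℕ → ℕ → ℕ),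
    (∀ s < m, sz s ≤ k ∧ MonoOn (sz s) (row s) ∧ MonoOn (sz s) (col s)) ∧
    x = ∏ s ∈ Finset.range m, minorAux P (sz s) (row s) (col s)

/-- `x` is a sum of products of minors of `P` of size at most `k`. -/
def Good {R : Type*} [CommRing R] (P : ℕ → ℕ → R) (k : ℕ) (x : R) : Prop :=
  ∃ (N : ℕ) (f : ℕ → R), (∀ t < N, GoodProd P k (f t)) ∧ x = ∑ t ∈ Finset.range N, f t

variable {R : Type*} [CommRing R] {P : ℕ → ℕ → R} {k : ℕ}

lemma goodProd_one : GoodProd P k (1 : R) :=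
  ⟨0, fun _ => 0, fun _ _ => 0, fun _ _ => 0, by simp, by simp⟩

lemma goodProd_minorAux {m : ℕ} {row col : ℕ → ℕ} (hm : m ≤ k)
    (hr : MonoOn m row) (hc : MonoOn m col) :
    GoodProd P k (minorAux P m row col) :=
  ⟨1, fun _ => m, fun _ => row, fun _ => col, fun _ _ => ⟨hm, hr, hc⟩, by
    rw [Finset.prod_range_one]⟩

lemma goodProd_mul {x y : R} (hx : GoodProd P k x) (hy : GoodProd P k y) :
    GoodProd P k (x * y) := by
  obtain ⟨m1, sz1, row1, col1, h1, rfl⟩ := hx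
  obtain ⟨m2, sz2, row2, col2, h2, rfl⟩ := hy
  refine ⟨m1 + m2, fun s => if s < m1 then sz1 s else sz2 (s - m1),
    fun s => if s < m1 then row1 s else row2 (s - m1),
    fun s => if s < m1 then col1 s else col2 (s - m1), ?_, ?_⟩
  · intro s hs
    by_cases h : s < m1
    · simpa [h] using h1 s h
    · simpa [h] using h2 (s - m1) (by omega)
  · rw [Finset.prod_range_add]
    congr 1
    · exact Finset.prod_congr rfl fun s hs => by
        rw [Finset.mem_range] at hs; simp [hs]
    · exact Finset.prod_congr rfl fun s hs => by
        simp [Nat.not_lt.mpr (Nat.le_add_right m1 s)]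

lemma good_zero : Good P k (0 : R) := ⟨0, fun _ => 0, by simp, by simp⟩

lemma good_one : Good P k (1 : R) :=
  ⟨1, fun _ => 1, fun _ _ => goodProd_one, by simp⟩

lemma good_add {x y : R} (hx : Good P k x) (hy : Good P k y) : Good P k (x + y) := by
  obtain ⟨N1, f1, h1, rfl⟩ := hx
  obtain ⟨N2, f2, h2, rfl⟩ := hy
  refine ⟨N1 + N2, fun t => if t < N1 then f1 t else f2 (t - N1), ?_, ?_⟩
  · intro t ht
    by_cases h : t < N1
    · simpa [h] using h1 t h
    · simpa [h] using h2 (t - N1) (by omega)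
  · rw [Finset.sum_range_add]
    congr 1
    · exact Finset.sum_congr rfl fun s hs => by
        rw [Finset.mem_range] at hs; simp [hs]
    · exact Finset.sum_congr rfl fun s hs => by
        simp [Nat.not_lt.mpr (Nat.le_add_right N1 s)]

lemma good_sum {ι : Type*} (s : Finset ι) (g : ι → R) (h : ∀ a ∈ s, Good P k (g a)) :
    Good P k (∑ a ∈ s, g a) := by
  induction s using Finset.cons_induction with
  | empty => simpa using good_zero
  | cons a s ha ih =>
      rw [Finset.sum_cons]
      exact good_add (h a (Finset.mem_cons_self a s))
        (ih fun b hb => h b (Finset.mem_cons_of_mem hb))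

lemma good_mul_goodProd {x y : R} (hx : Good P k x) (hy : GoodProd P k y) :
    Good P k (x * y) := by
  obtain ⟨N, f, h1, rfl⟩ := hx
  refine ⟨N, fun t => f t * y, fun t ht => goodProd_mul (h1 t ht) hy, ?_⟩
  rw [Finset.sum_mul]

lemma good_mono {k' : ℕ} (hk : k ≤ k') {x : R} (hx : Good P k x) : Good P k' x := by
  obtain ⟨N, f, h1, rfl⟩ := hx
  refine ⟨N, f, fun t ht => ?_, rfl⟩
  obtain ⟨m, sz, row, col, hc, he⟩ := h1 t ht
  exact ⟨m, sz, row, col, fun s hs => ⟨le_trans (hc s hs).1 hk, (hc s hs).2⟩, he⟩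

/-- Extension of a `Fin m`-indexed sequence to `ℕ`. -/
def extSeq {m : ℕ} (r : Fin m → ℕ) : ℕ → ℕ := fun x => if h : x < m then r ⟨x, h⟩ else 0

lemma minor_eq_minorAux {m : ℕ} (r c : Fin m → ℕ) :
    minor P r c = minorAux P m (extSeq r) (extSeq c) := by
  unfold minorAux
  congr 1 <;> funext i <;> simp [extSeq, i.isLt]

lemma monoOn_extSeq {m : ℕ} {r : Fin m → ℕ} (hr : StrictMono r) : MonoOn m (extSeq r) := by
  intro i j hij hj
  unfold extSeq
  rw [dif_pos (lt_trans hij hj), dif_pos hj]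
  exact hr (by exact hij)

lemma goodProd_minor {m : ℕ} (hm : m ≤ k) (r c : Fin m → ℕ)
    (hr : StrictMono r) (hc : StrictMono c) : GoodProd P k (minor P r c) := by
  rw [minor_eq_minorAux]
  exact goodProd_minorAux hm (monoOn_extSeq hr) (monoOn_extSeq hc)

end GoodMachinery

section Finiteness

open Function

variable {R : Type*} [CommRing R]

lemma support_fMul_row (P Q : ℕ → ℕ → R) (i : ℕ) (hP : (support (P i)).Finite)
    (hQ : ∀ j, (support (Q j)).Finite) : (support (fMul P Q i)).Finite := by
  refine Set.Finite.subset (Set.Finite.biUnion hP (fun j _ => hQ j)) ?_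
  intro x hx
  by_contra hmem
  simp only [Set.mem_iUnion, not_exists] at hmem
  apply hx
  show (∑ᶠ j, P i j * Q j x) = 0
  apply finsum_eq_zero_of_forall_eq_zero
  intro j
  by_cases hj : P i j = 0
  · rw [hj, zero_mul]
  · have : Q j x = 0 := by
      by_contra h
      exact (hmem j hj) h
    rw [this, mul_zero]

lemma support_fPow_row (P : ℕ → ℕ → R) (hP : ∀ i, (support (P i)).Finite) (n i : ℕ) :
    (support (fPow P n i)).Finite := by
  induction n with
  | zero =>
      refine Set.Finite.subset (Set.finite_singleton i) ?_
      intro x hx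
      by_contra h
      exact hx (by simp [fPow, Ne.symm (by simpa using h)])
  | succ n ih => exact support_fMul_row _ _ _ ih hP

/-- Key expansion: if all `r i ≥ 1`, the relevant entries of `outputMat P` are entries of a
genuine finite matrix product. -/
lemma expand_outputMat (P : ℕ → ℕ → R) (hP : RowOrColFinite P) {k : ℕ} (r c : Fin k → ℕ)
    (hr1 : ∀ i, 1 ≤ r i) :
    ∃ L : ℕ, ∀ i j : Fin k,
      outputMat P (r i) (c j) = ∑ x ∈ Finset.range L, fPow P (r i - 1) 0 x * P x (c j) := by
  have key : ∃ L : ℕ, ∀ i j : Fin k,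
      (support fun x => fPow P (r i - 1) 0 x * P x (c j)) ⊆ ↑(Finset.range L) := by
    rcases hP with hrow | hcol
    · have hfin : ∀ i : Fin k, (support (fPow P (r i - 1) 0)).Finite :=
        fun i => support_fPow_row P hrow _ 0
      have hU : (⋃ i : Fin k, support (fPow P (r i - 1) 0)).Finite :=
        Set.finite_iUnion hfin
      obtain ⟨L, hL⟩ := hU.bddAbove
      refine ⟨L + 1, fun i j x hx => ?_⟩
      have hx' : x ∈ support (fPow P (r i - 1) 0) := by
        intro h0
        exact hx (by simp [Function.mem_support.mp, h0, zero_mul])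
      have : x ≤ L := hL (Set.mem_iUnion.mpr ⟨i, hx'⟩)
      simp only [Finset.coe_range, Set.mem_Iio]
      omega
    · have hfin : ∀ j : Fin k, (support fun x => P x (c j)).Finite := fun j => hcol (c j)
      have hU : (⋃ j : Fin k, support fun x => P x (c j)).Finite := Set.finite_iUnion hfin
      obtain ⟨L, hL⟩ := hU.bddAbove
      refine ⟨L + 1, fun i j x hx => ?_⟩
      have hx' : x ∈ support fun x => P x (c j) := by
        intro h0
        exact hx (by simp [h0, mul_zero])
      have : x ≤ L := hL (Set.mem_iUnion.mpr ⟨j, hx'⟩)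
      simp only [Finset.coe_range, Set.mem_Iio]
      omega
  obtain ⟨L, hL⟩ := key
  refine ⟨L, fun i j => ?_⟩
  have hri : r i = (r i - 1) + 1 := (Nat.succ_pred_eq_of_pos (hr1 i)).symm
  have : outputMat P (r i) (c j) = fMul (fPow P (r i - 1)) P 0 (c j) := by
    show fPow P (r i) 0 (c j) = _
    rw [hri]
    rfl
  rw [this]
  exact finsum_eq_finset_sum_of_support_subset _ (hL i j)

end Finiteness

section MainInduction

open Finset

variable {R : Type*} [CommRing R]

lemma main_induction (P : ℕ → ℕ → R) (hP : RowOrColFinite P) :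
    ∀ (n k : ℕ) (r c : Fin k → ℕ), k + ∑ i, r i ≤ n → StrictMono r → StrictMono c →
      Good P k (minor (outputMat P) r c) := by
  intro n
  induction n with
  | zero =>
      intro k r c hn hr hc
      match k, r, c with
      | 0, r, c =>
        have : minor (outputMat P) r c = 1 := Matrix.det_fin_zero
        rw [this]; exact good_one
      | k' + 1, r, c => omega
  | succ n ih =>
      intro k r c hn hr hc
      match k with
      | 0 =>
          have : minor (outputMat P) r c = 1 := Matrix.det_fin_zero
          rw [this]; exact good_one
      | k' + 1 =>
          by_cases hr0 : r 0 = 0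
          · -- first row of the submatrix is the 0-th row of `O(P)`, i.e. `e₀`
            have hA0 : ∀ j : Fin (k' + 1),
                outputMat P (r 0) (c j) = if 0 = c j then 1 else 0 := by
              intro j; rw [hr0]; rfl
            by_cases hc0 : c 0 = 0
            · -- expand along the first row
              have hdet : minor (outputMat P) r c
                  = minor (outputMat P) (r ∘ Fin.succ) (c ∘ Fin.succ) := by
                unfold minor
                rw [Matrix.det_succ_row_zero]
                rw [Fintype.sum_eq_single (0 : Fin (k' + 1))]
                · have h00 : (Matrix.of fun i j => outputMat P (r i) (c j)) 0 0 = 1 := by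
                    rw [Matrix.of_apply, hA0 0, hc0]
                    simp
                  rw [h00]
                  simp only [Fin.val_zero, pow_zero, one_mul, mul_one, Fin.succAbove_zero]
                  rfl
                · intro j hj
                  have : c 0 < c j := hc (Fin.pos_of_ne_zero hj)
                  have : (0 = c j) = False := by
                    simp only [eq_iff_iff, iff_false]
                    omega
                  simp only [Matrix.of_apply, hA0, this, if_false, mul_zero, zero_mul]
              rw [hdet]
              have hsum : ∑ i, r i = r 0 + ∑ i, r (Fin.succ i) := Fin.sum_univ_succ r
              refine good_mono (Nat.le_succ k') (ih k' (r ∘ Fin.succ) (c ∘ Fin.succ) ?_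
                (hr.comp Fin.strictMono_succ) (hc.comp Fin.strictMono_succ))
              have : ∑ i, (r ∘ Fin.succ) i = ∑ i, r (Fin.succ i) := rfl
              omega
            · -- first row of the submatrix is zero
              have hdet : minor (outputMat P) r c = 0 := by
                unfold minor
                apply Matrix.det_eq_zero_of_row_eq_zero 0
                intro j
                have hcj : c j ≠ 0 := by
                  rcases eq_or_ne j 0 with rfl | hj
                  · exact hc0
                  · have : c 0 < c j := hc (Fin.pos_of_ne_zero hj)
                    omega
                simp only [Matrix.of_apply, hA0, Ne.symm hcj, if_false]
              rw [hdet]; exact good_zero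
          · -- all rows are ≥ 1: Cauchy-Binet step
            have hr1 : ∀ i, 1 ≤ r i := by
              intro i
              have := hr.monotone (Fin.zero_le i)
              omega
            obtain ⟨L, hL⟩ := expand_outputMat P hP r c hr1
            set A : Matrix (Fin (k' + 1)) (Fin L) R :=
              Matrix.of fun i x => fPow P (r i - 1) 0 x.val with hA
            set B : Matrix (Fin L) (Fin (k' + 1)) R :=
              Matrix.of fun x j => P x.val (c j) with hB
            have hmat : minor (outputMat P) r c = (A * B).det := by
              unfold minor
              congr 1
              ext i j
              rw [Matrix.mul_apply]
              show outputMat P (r i) (c j) = ∑ x : Fin L, A i x * B x j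
              rw [hL i j,
                ← Fin.sum_univ_eq_sum_range (fun x => fPow P (r i - 1) 0 x * P x (c j)) L]
              rfl
            rw [hmat, cauchy_binet]
            apply good_sum
            intro f hf
            have hfmono : StrictMono f := by simpa using hf
            have e1 : (Matrix.of fun i j => A i (f j)).det
                = minor (outputMat P) (fun i => r i - 1) (fun j => (f j : ℕ)) := rfl
            have e2 : (Matrix.of fun i j => B (f i) j).det
                = minor P (fun i => (f i : ℕ)) c := rfl
            rw [e1, e2]
            have hrmono : StrictMono (fun i => r i - 1) := by
              intro a b hab
              have h1 := hr1 a
              have h2 := hr hab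
              show r a - 1 < r b - 1
              omega
            have hfval : StrictMono (fun j => (f j : ℕ)) := fun a b hab => hfmono hab
            have hsum : ∑ i, r i = (∑ i, (r i - 1)) + (k' + 1) := by
              have h1 : ∑ i : Fin (k' + 1), r i = ∑ i : Fin (k' + 1), ((r i - 1) + 1) :=
                Finset.sum_congr rfl fun i _ => by have := hr1 i; omega
              rw [h1, Finset.sum_add_distrib]
              simp
            refine good_mul_goodProd (ih (k' + 1) (fun i => r i - 1) (fun j => (f j : ℕ)) ?_
              hrmono hfval) (goodProd_minor le_rfl _ _ hfval hc)
            have hb : ∑ i : Fin (k' + 1), (fun i => r i - 1) i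
                = ∑ i : Fin (k' + 1), (r i - 1) := rfl
            omega

end MainInduction

lemma convert_good {T : Type*} [CommRing T] (W : ℕ → ℕ → T) (k : ℕ) (x : T)
    (hx : Good W k x) :
    ∃ (N : ℕ) (M : Fin N → ℕ) (sz : (t : Fin N) → Fin (M t) → ℕ)
      (row col : (t : Fin N) → (s : Fin (M t)) → Fin (sz t s) → ℕ),
      (∀ t s, sz t s ≤ k ∧ StrictMono (row t s) ∧ StrictMono (col t s)) ∧
      x = ∑ t, ∏ s, minor W (row t s) (col t s) := by
  obtain ⟨N, f, hf, rfl⟩ := hx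
  choose m sz row col hcond heq using hf
  refine ⟨N, fun t => m t t.isLt, fun t s => sz t t.isLt s,
    fun t s i => row t t.isLt s i, fun t s i => col t t.isLt s i, ?_, ?_⟩
  · intro t s
    obtain ⟨h1, h2, h3⟩ := hcond t t.isLt s s.isLt
    exact ⟨h1, monoOn_iff.mp h2, monoOn_iff.mp h3⟩
  · rw [← Fin.sum_univ_eq_sum_range f N]
    refine Finset.sum_congr rfl fun t _ => ?_
    rw [heq t t.isLt]
    rw [← Fin.prod_univ_eq_prod_range
      (fun s => minorAux W (sz t t.isLt s) (row t t.isLt s) (col t t.isLt s)) (m t t.isLt)]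
    rfl

/-- (i) Every `k × k` minor of the output matrix `O(P)` can be written as a sum
of products of minors of size `≤ k` of the production matrix `P` (in particular,
as a polynomial with nonnegative integer coefficients in those minors).
(ii) Consequently, if `Q` is a row-finite or column-finite matrix over a
partially ordered commutative ring that is totally positive of order `ρ`
(all minors of size `≤ ρ` are nonnegative), then its output matrix `O(Q)` is
also totally positive of order `ρ`. -/
theorem output_matrix_minors_and_TP {R : Type*} [CommRing R]
    {S : Type*} [CommRing S] [PartialOrder S] [IsOrderedRing S]
    (P : ℕ → ℕ → R) (hP : RowOrColFinite P)
    (Q : ℕ → ℕ → S) (hQ : RowOrColFinite Q) (ρ : ℕ∞)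
    (hTP : ∀ (k : ℕ), (k : ℕ∞) ≤ ρ → ∀ (r c : Fin k → ℕ),
      StrictMono r → StrictMono c → 0 ≤ minor Q r c) :
    (∀ (k : ℕ) (r c : Fin k → ℕ), StrictMono r → StrictMono c →
      ∃ (N : ℕ) (M : Fin N → ℕ) (sz : (t : Fin N) → Fin (M t) → ℕ)
        (row col : (t : Fin N) → (s : Fin (M t)) → Fin (sz t s) → ℕ),
        (∀ t s, sz t s ≤ k ∧ StrictMono (row t s) ∧ StrictMono (col t s)) ∧
        minor (outputMat P) r c = ∑ t, ∏ s, minor P (row t s) (col t s))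
    ∧ (∀ (k : ℕ), (k : ℕ∞) ≤ ρ → ∀ (r c : Fin k → ℕ),
        StrictMono r → StrictMono c → 0 ≤ minor (outputMat Q) r c) := by
  constructor
  · intro k r c hr hc
    exact convert_good (T := R) P k _
      (main_induction P hP (k + ∑ i, r i) k r c le_rfl hr hc)
  · intro k hk r c hr hc
    obtain ⟨N, M, sz, row, col, hcond, heq⟩ := convert_good (T := S) Q k _
      (main_induction Q hQ (k + ∑ i, r i) k r c le_rfl hr hc)
    rw [heq]
    apply Finset.sum_nonneg
    intro t _
    apply Finset.prod_nonneg
    intro s _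
    obtain ⟨h1, h2, h3⟩ := hcond t s
    exact hTP (sz t s) (le_trans (by exact_mod_cast Nat.cast_le.mpr h1) hk) _ _ h2 h3
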